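/- For n ≥ 1 and r > 0, the boundary of the spherical tube M = {z ∈ ℂ^{n+1} : Σ_{h=1}^{n+1} (z_h + z̄_h)² = r²} is a smooth hypersurface which is Levi umbilical with constant Levi curvature H = 1/r: at every z ∈ M, h(X,Y) + h(JX,JY) = (2/r) ⟨X,Y⟩ for all X, Y in the horizontal space H_z. -/

import Mathlib

noncomputable section
open scoped BigOperators

/-- `ℂ^{n+1}`, identified with `ℝ^{2n+2}` via its real structure. -/
abbrev E (n : ℕ) : Type := EuclideanSpace ℂ (Fin (n + 1))

/-- The standard complex structure: multiplication by `i`. -/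
def J {n : ℕ} (v : E n) : E n := Complex.I • v

/-- The real inner product `⟨x, y⟩ = Re ⟪x, y⟫`. -/
def rI {n : ℕ} (x y : E n) : ℝ := (inner ℂ x y : ℂ).re

/-- The (real) tangent space at `p` of a hypersurface with unit normal `ν`. -/
def tangAt {n : ℕ} (ν : E n → E n) (p : E n) : Set (E n) := {X | rI (ν p) X = 0}

/-- `M` is a smooth embedded real hypersurface of `ℂ^{n+1}` (locally a regular zero
set of a smooth real function), oriented by the smooth unit normal field `ν`
(extended smoothly to the ambient space). -/
def IsHypersurface {n : ℕ} (M : Set (E n)) (ν : E n → E n) : Prop :=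
  ContDiff ℝ (⊤ : ℕ∞) ν ∧ (∀ p ∈ M, ‖ν p‖ = 1) ∧
    ∀ p ∈ M, ∃ (V : Set (E n)) (F : E n → ℝ), IsOpen V ∧ p ∈ V ∧
      ContDiffOn ℝ (⊤ : ℕ∞) F V ∧ (M ∩ V = {z ∈ V | F z = 0}) ∧
      ∀ z ∈ M ∩ V, ∀ X : E n, (fderiv ℝ F z X = 0 ↔ X ∈ tangAt ν z)

/-- The horizontal (maximal complex) subspace `H_p = {X ∈ T_pM : JX ∈ T_pM}`. -/
def horizAt {n : ℕ} (ν : E n → E n) (p : E n) : Set (E n) :=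
  {X | X ∈ tangAt ν p ∧ J X ∈ tangAt ν p}

/-- The second fundamental form `h(X,Y) = ⟨X, ∂_Y ν⟩`. -/
def sff {n : ℕ} (ν : E n → E n) (p : E n) (X Y : E n) : ℝ :=
  rI X (fderiv ℝ ν p Y)

/-- The family `X_1, …, X_n, J X_1, …, J X_n`. -/
def combined {n : ℕ} (X : Fin n → E n) : (Fin n ⊕ Fin n) → E n :=
  Sum.elim X (fun α => J (X α))

/-- `{X_1, …, X_n, J X_1, …, J X_n}` is an orthonormal basis of the horizontal
space at `p` (w.r.t. the real inner product). -/
def IsHorizONB {n : ℕ} (ν : E n → E n) (p : E n) (X : Fin n → E n) : Prop :=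
  (∀ α, X α ∈ horizAt ν p) ∧
  (∀ i j, rI (combined X i) (combined X j) = if i = j then 1 else 0) ∧
  (∀ Y ∈ horizAt ν p, Y ∈ Submodule.span ℝ (Set.range (combined X)))

/-- The boundary of the spherical tube `{z : Σ_h (z_h + z̄_h)² = r²}`. -/
def Msph (n : ℕ) (r : ℝ) : Set (E n) :=
  {z | ∑ h, (z h + (starRingEnd ℂ) (z h)) ^ 2 = (r : ℂ) ^ 2}

/-- The outward unit normal `ν(z) = ((2 Re z_h)/r)_h` of the spherical tube. -/
def nuT {n : ℕ} (r : ℝ) (z : E n) : E n :=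
  (WithLp.equiv 2 _).symm fun h => ((2 * (z h).re) / r : ℂ)

-- helpers
lemma nuT_coord {n : ℕ} (r : ℝ) (z : E n) (h : Fin (n+1)) :
    nuT r z h = (((2 * (z h).re) / r : ℝ) : ℂ) := by
  show ((2 * ((z h).re : ℂ)) / (r : ℂ)) = _
  push_cast
  ring

lemma J_coord {n : ℕ} (v : E n) (h : Fin (n+1)) : J v h = Complex.I * v h := rfl

lemma J_re {n : ℕ} (v : E n) (h : Fin (n+1)) : (J v h).re = -(v h).im := by
  rw [J_coord]; simp

lemma J_im {n : ℕ} (v : E n) (h : Fin (n+1)) : (J v h).im = (v h).re := by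
  rw [J_coord]; simp

lemma rI_eq {n : ℕ} (x y : E n) :
    rI x y = ∑ h, ((x h).re * (y h).re + (x h).im * (y h).im) := by
  unfold rI
  rw [PiLp.inner_apply, Complex.re_sum]
  refine Finset.sum_congr rfl fun h _ => ?_
  simp [RCLike.inner_apply, Complex.mul_re]
  ring

def nuL {n : ℕ} (r : ℝ) : E n →L[ℝ] E n :=
  LinearMap.toContinuousLinearMap
  { toFun := nuT r
    map_add' := fun x y => by
      ext h
      show ((2 * ((x + y) h).re : ℂ)) / r = _
      have : (x + y) h = x h + y h := rfl
      rw [this]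
      show _ = (2 * ((x h).re : ℂ)) / r + (2 * ((y h).re : ℂ)) / r
      push_cast [Complex.add_re]
      ring
    map_smul' := fun c x => by
      ext h
      show ((2 * ((c • x) h).re : ℂ)) / r = c • ((2 * ((x h).re : ℂ)) / r)
      have : (c • x) h = c • x h := rfl
      rw [this, Complex.real_smul, Complex.real_smul, Complex.mul_re]
      simp
      push_cast
      ring }

lemma rI_nuT_left {n : ℕ} (r : ℝ) (z X : E n) :
    rI (nuT r z) X = (2 / r) * ∑ h, (z h).re * (X h).re := by
  rw [rI_eq, Finset.mul_sum]
  refine Finset.sum_congr rfl fun h _ => ?_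
  rw [nuT_coord]
  simp
  ring

lemma rI_nuT_right {n : ℕ} (r : ℝ) (A B : E n) :
    rI A (nuT r B) = (2 / r) * ∑ h, (A h).re * (B h).re := by
  rw [rI_eq, Finset.mul_sum]
  refine Finset.sum_congr rfl fun h _ => ?_
  rw [nuT_coord]
  simp
  ring

lemma nuT_eq_nuL {n : ℕ} (r : ℝ) : (nuT (n := n) r) = ⇑(nuL (n := n) r) := rfl

lemma fderiv_nuT {n : ℕ} (r : ℝ) (z : E n) : fderiv ℝ (nuT r) z = nuL r := by
  rw [nuT_eq_nuL]; exact (nuL r).fderiv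

lemma mem_Msph_iff {n : ℕ} {r : ℝ} {z : E n} :
    z ∈ Msph n r ↔ ∑ h, (2 * (z h).re) ^ 2 = r ^ 2 := by
  unfold Msph
  simp only [Set.mem_setOf_eq]
  have e : ∀ h : Fin (n+1), (z h + (starRingEnd ℂ) (z h)) ^ 2 = (((2 * (z h).re) ^ 2 : ℝ) : ℂ) :=
    fun h => by rw [Complex.add_conj]; push_cast; ring
  rw [Finset.sum_congr rfl fun h _ => e h, ← Complex.ofReal_sum,
    show ((r : ℂ)) ^ 2 = ((r ^ 2 : ℝ) : ℂ) by push_cast; ring, Complex.ofReal_inj]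

theorem stmt18 {n : ℕ} (hn : 1 ≤ n) (r : ℝ) (hr : 0 < r) :
    IsHypersurface (Msph n r) (nuT r) ∧
    ∀ z ∈ Msph n r, ∀ X ∈ horizAt (nuT r) z, ∀ Y ∈ horizAt (nuT r) z,
      sff (nuT r) z X Y + sff (nuT r) z (J X) (J Y) = (2 / r) * rI X Y := by
  have hrne : r ≠ 0 := ne_of_gt hr
  constructor
  · refine ⟨?_, ?_, ?_⟩
    · rw [nuT_eq_nuL]; exact (nuL r).contDiff
    · intro p hp
      have key := mem_Msph_iff.mp hp
      rw [EuclideanSpace.norm_eq]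
      have e : ∀ h : Fin (n+1), ‖nuT r p h‖ ^ 2 = (2 * (p h).re) ^ 2 / r ^ 2 := by
        intro h
        rw [nuT_coord, Complex.norm_real, Real.norm_eq_abs, sq_abs, div_pow]
      rw [Finset.sum_congr rfl fun h _ => e h, ← Finset.sum_div, key,
        div_self (by positivity), Real.sqrt_one]
    · intro p hp
      refine ⟨Set.univ, fun z => (∑ h, (2 * (z h).re) ^ 2) - r ^ 2, isOpen_univ,
        trivial, ?_, ?_, ?_⟩
      · refine ContDiff.contDiffOn ?_
        refine ContDiff.sub ?_ contDiff_const
        refine ContDiff.sum fun h _ => ?_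
        have : ContDiff ℝ (⊤ : ℕ∞) (fun z : E n => (z h).re) :=
          (Complex.reCLM.comp ((EuclideanSpace.proj h).restrictScalars ℝ)).contDiff
        exact (contDiff_const.mul this).pow 2
      · ext z
        simp [Set.mem_inter_iff, Set.mem_setOf_eq, mem_Msph_iff, sub_eq_zero]
      · intro z hz X
        set G : Fin (n+1) → E n →L[ℝ] ℝ :=
          fun h => Complex.reCLM.comp ((EuclideanSpace.proj h).restrictScalars ℝ) with hGdef
        have hGz : ∀ (h : Fin (n+1)) (w : E n), G h w = (w h).re := fun _ _ => rfl
        have hterm : ∀ h : Fin (n+1), HasFDerivAt (fun z : E n => (2 * (z h).re) ^ 2)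
            ((4 * (2 * (z h).re)) • G h) z := by
          intro h
          have h1 : HasFDerivAt (fun z : E n => 2 * (z h).re) ((2 : ℝ) • G h) z :=
            ((G h).hasFDerivAt).const_mul 2
          have h2 := h1.mul h1
          have h3 : (fun z : E n => (2 * (z h).re) ^ 2)
              = fun z : E n => (2 * (z h).re) * (2 * (z h).re) := by
            funext w; ring
          have h4 : ((4 * (2 * (z h).re)) • G h : E n →L[ℝ] ℝ)
              = (2 * (z h).re) • ((2 : ℝ) • G h) + (2 * (z h).re) • ((2 : ℝ) • G h) := by
            ext w
            simp
            ring
          rw [h3, h4]; exact h2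
        have hF : HasFDerivAt (fun z : E n => (∑ h, (2 * (z h).re) ^ 2) - r ^ 2)
            (∑ h, (4 * (2 * (z h).re)) • G h) z :=
          (HasFDerivAt.fun_sum fun h _ => hterm h).sub_const _
        rw [hF.fderiv]
        have hfX : (∑ h, (4 * (2 * (z h).re)) • G h) X = 8 * ∑ h, (z h).re * (X h).re := by
          rw [ContinuousLinearMap.sum_apply, Finset.mul_sum]
          refine Finset.sum_congr rfl fun h _ => ?_
          simp [hGz]
          ring
        rw [hfX]
        simp only [tangAt, Set.mem_setOf_eq]
        rw [rI_nuT_left]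
        constructor
        · intro h0
          rcases mul_eq_zero.mp h0 with h | h
          · norm_num at h
          · rw [h, mul_zero]
        · intro h0
          rcases mul_eq_zero.mp h0 with h | h
          · exact absurd h (div_ne_zero two_ne_zero hrne)
          · rw [h, mul_zero]
  · intro z hz X hX Y hY
    have hsff : ∀ A B : E n, sff (nuT r) z A B = (2 / r) * ∑ h, (A h).re * (B h).re := by
      intro A B
      unfold sff
      rw [fderiv_nuT]
      have : (nuL (n := n) r) B = nuT r B := rfl
      rw [this, rI_nuT_right]
    have e2 : sff (nuT r) z (J X) (J Y) = (2 / r) * ∑ h, (X h).im * (Y h).im := by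
      rw [hsff (J X) (J Y)]
      congr 1
      refine Finset.sum_congr rfl fun h _ => ?_
      rw [J_re, J_re]; ring
    rw [hsff X Y, e2, rI_eq, Finset.mul_sum, Finset.mul_sum, Finset.mul_sum,
      ← Finset.sum_add_distrib]
    refine Finset.sum_congr rfl fun h _ => by ring
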